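/- Let R → R' be a surjection of complete local commutative Noetherian W-algebras with residue field k, where W is a complete DVR, and suppose Spec(R) contains two distinct points mapping onto the two points of the generic fiber of Spec(W[ℤ/2]) via a surjection f: W[ℤ/2] → R. If there exist two distinct W-algebra homomorphisms R → W whose composites with f are the two distinct W-algebra homomorphisms W[ℤ/2] → W, then f is an isomorphism, i.e. R ≅ W[ℤ/2]. -/

import Mathlib

/-- Let `W` be a complete discrete valuation ring of characteristic `0` with residue field of
characteristic `2` in which `2` is a uniformizer, let `R` be a complete local commutative
Noetherian `W`-algebra, and let `f : W[ℤ/2] → R` be a surjective `W`-algebra homomorphism.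
If there exist two distinct `W`-algebra homomorphisms `R → W` whose composites with `f`
are distinct (hence are the two distinct `W`-algebra homomorphisms `W[ℤ/2] → W`),
then `f` is an isomorphism, i.e. `R ≅ W[ℤ/2]`. -/
theorem surjection_from_group_ring_is_iso (W : Type) [CommRing W] [IsDomain W]
    [IsDiscreteValuationRing W] [CharZero W]
    [IsAdicComplete (IsLocalRing.maximalIdeal W) W]
    (hunif : Irreducible (2 : W)) (hres : CharP (IsLocalRing.ResidueField W) 2)
    (R : Type) [CommRing R] [IsLocalRing R] [IsNoetherianRing R]
    [IsAdicComplete (IsLocalRing.maximalIdeal R) R] [Algebra W R]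
    (f : MonoidAlgebra W (Multiplicative (ZMod 2)) →ₐ[W] R)
    (hf : Function.Surjective f)
    (φ ψ : R →ₐ[W] W) (hdist : φ ≠ ψ) (hcomp : φ.comp f ≠ ψ.comp f) :
    Function.Bijective f := by
  have hall : ∀ x : Multiplicative (ZMod 2), x = 1 ∨ x = Multiplicative.ofAdd 1 := by decide
  refine ⟨?_, hf⟩
  rw [injective_iff_map_eq_zero]
  intro z hz
  have hz' : z = MonoidAlgebra.single (1 : Multiplicative (ZMod 2)) (z.coeff 1)
      + MonoidAlgebra.single (Multiplicative.ofAdd (1 : ZMod 2))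
        (z.coeff (Multiplicative.ofAdd (1 : ZMod 2))) := by
    ext x
    rcases hall x with h | h <;> subst h <;>
      rw [MonoidAlgebra.coeff_add, Finsupp.add_apply, MonoidAlgebra.coeff_single, MonoidAlgebra.coeff_single, Finsupp.single_eq_same, Finsupp.single_eq_of_ne (by decide)] <;>
      ring
  have key : ∀ (χ : R →ₐ[W] W),
      χ (f z) = z.coeff 1 + z.coeff (Multiplicative.ofAdd (1 : ZMod 2))
        * χ (f (MonoidAlgebra.of W (Multiplicative (ZMod 2))
            (Multiplicative.ofAdd (1 : ZMod 2)))) := by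
    intro χ
    conv_lhs => rw [hz']
    rw [show (MonoidAlgebra.single (1 : Multiplicative (ZMod 2)) (z.coeff 1) :
        MonoidAlgebra W (Multiplicative (ZMod 2)))
        = algebraMap W (MonoidAlgebra W (Multiplicative (ZMod 2))) (z.coeff 1) from rfl,
      MonoidAlgebra.single_eq_algebraMap_mul_of,
      map_add, AlgHom.commutes f, map_mul, AlgHom.commutes f,
      map_add, AlgHom.commutes χ, map_mul, AlgHom.commutes χ]
    simp [Algebra.algebraMap_self]
  have hne : φ (f (MonoidAlgebra.of W (Multiplicative (ZMod 2))
        (Multiplicative.ofAdd (1 : ZMod 2))))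
      ≠ ψ (f (MonoidAlgebra.of W (Multiplicative (ZMod 2))
        (Multiplicative.ofAdd (1 : ZMod 2)))) := by
    intro h
    apply hcomp
    apply MonoidAlgebra.algHom_ext
    intro m
    rcases hall m with hm | hm <;> subst hm
    · rw [← MonoidAlgebra.one_def]
      simp
    · exact h
    exact Subsingleton.elim _ _
  have e1 := key φ
  have e2 := key ψ
  rw [hz, map_zero] at e1 e2
  have hzg : z.coeff (Multiplicative.ofAdd (1 : ZMod 2)) = 0 := by
    have h0 : z.coeff (Multiplicative.ofAdd (1 : ZMod 2))
        * (φ (f (MonoidAlgebra.of W (Multiplicative (ZMod 2))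
            (Multiplicative.ofAdd (1 : ZMod 2))))
          - ψ (f (MonoidAlgebra.of W (Multiplicative (ZMod 2))
            (Multiplicative.ofAdd (1 : ZMod 2))))) = 0 := by
      linear_combination - e1 + e2
    rcases mul_eq_zero.mp h0 with h | h
    · exact h
    · exact absurd (sub_eq_zero.mp h) hne
  have hz1 : z.coeff 1 = 0 := by simpa [hzg] using e1.symm
  rw [hz', hzg, hz1]
  simp
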